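/- Let η'(t,τ) be defined by η'(t,τ) = [η T_U V ρ e^{ρτ} + (T_Iδ² - T_Iδρ - η T_U V δ)(e^{ρτ} - 1)] / [V(T_Iδ + T_Uρ)e^{ρτ} - V T_Iδ], where all quantities on the right are evaluated at time t. Then η' satisfies the transport PDE ∂η'/∂τ = T_I'δ'(δ' - ρ)/(T_U'V') - δ'(T_I' + T_U')η'/T_U', where T_U'(t,τ), T_I'(t,τ), δ'(τ), V'(t,τ) = V(t) are the corresponding transformed quantities T_U' = T_U + T_I - (T_I/ρ)(δe^{-ρτ}+ρ-δ), T_I' = (T_I/ρ)(δe^{-ρτ}+ρ-δ), δ' = δρ/((ρ-δ)e^{ρτ}+δ), and η'(t,0) = η(t) (assuming all denominators are nonzero and ρ ≠ 0). -/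

import Mathlib

set_option maxHeartbeats 2000000 in
open Real in
theorem stmt_15 (T_U T_I V η : ℝ → ℝ) (ρ δ : ℝ) (hρ : ρ ≠ 0)
    (η' T_U' T_I' V' : ℝ → ℝ → ℝ) (δ' : ℝ → ℝ)
    (hη' : ∀ t τ, η' t τ =
      (η t * T_U t * V t * ρ * exp (ρ * τ) +
        (T_I t * δ ^ 2 - T_I t * δ * ρ - η t * T_U t * V t * δ) * (exp (ρ * τ) - 1)) /
      (V t * (T_I t * δ + T_U t * ρ) * exp (ρ * τ) - V t * T_I t * δ))
    (hTU' : ∀ t τ, T_U' t τ =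
      T_U t + T_I t - (T_I t / ρ) * (δ * exp (-ρ * τ) + ρ - δ))
    (hTI' : ∀ t τ, T_I' t τ = (T_I t / ρ) * (δ * exp (-ρ * τ) + ρ - δ))
    (hV' : ∀ t τ, V' t τ = V t)
    (hδ' : ∀ τ, δ' τ = δ * ρ / ((ρ - δ) * exp (ρ * τ) + δ)) :
    (∀ t τ, (ρ - δ) * exp (ρ * τ) + δ ≠ 0 → V t ≠ 0 →
      V t * (T_I t * δ + T_U t * ρ) * exp (ρ * τ) - V t * T_I t * δ ≠ 0 →
      T_U' t τ ≠ 0 →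
      HasDerivAt (fun s => η' t s)
        (T_I' t τ * δ' τ * (δ' τ - ρ) / (T_U' t τ * V' t τ) -
          δ' τ * (T_I' t τ + T_U' t τ) * η' t τ / T_U' t τ) τ) ∧
    (∀ t, V t ≠ 0 → T_U t ≠ 0 → η' t 0 = η t) := by
  constructor
  · intro t τ h1 hV hD hTU
    have he : HasDerivAt (fun s : ℝ => exp (ρ * s)) (ρ * exp (ρ * τ)) τ := by
      have h := ((hasDerivAt_id τ).const_mul ρ).exp
      simpa [mul_comm] using h
    have hEne : exp (ρ * τ) ≠ 0 := exp_ne_zero _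
    have hE : exp (-ρ * τ) = (exp (ρ * τ))⁻¹ := by rw [neg_mul, exp_neg]
    have hnum : HasDerivAt (fun s : ℝ =>
        η t * T_U t * V t * ρ * exp (ρ * s) +
          (T_I t * δ ^ 2 - T_I t * δ * ρ - η t * T_U t * V t * δ) * (exp (ρ * s) - 1))
        (η t * T_U t * V t * ρ * (ρ * exp (ρ * τ)) +
          (T_I t * δ ^ 2 - T_I t * δ * ρ - η t * T_U t * V t * δ) * (ρ * exp (ρ * τ))) τ :=
      (he.const_mul _).add ((he.sub_const 1).const_mul _)
    have hden : HasDerivAt (fun s : ℝ =>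
        V t * (T_I t * δ + T_U t * ρ) * exp (ρ * s) - V t * T_I t * δ)
        (V t * (T_I t * δ + T_U t * ρ) * (ρ * exp (ρ * τ))) τ :=
      (he.const_mul _).sub_const _
    have hdiv := hnum.div hden hD
    have hfun : (fun s : ℝ => η' t s) = fun s : ℝ =>
        (η t * T_U t * V t * ρ * exp (ρ * s) +
          (T_I t * δ ^ 2 - T_I t * δ * ρ - η t * T_U t * V t * δ) * (exp (ρ * s) - 1)) /
        (V t * (T_I t * δ + T_U t * ρ) * exp (ρ * s) - V t * T_I t * δ) := by
      funext s; rw [hη' t s]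
    rw [hfun]
    -- closed forms for the transformed quantities
    have hTUeq : T_U' t τ =
        (V t * (T_I t * δ + T_U t * ρ) * exp (ρ * τ) - V t * T_I t * δ) /
          (V t * ρ * exp (ρ * τ)) := by
      rw [hTU' t τ, hE]
      field_simp
      ring
    have hTIeq : T_I' t τ = T_I t * ((ρ - δ) * exp (ρ * τ) + δ) / (ρ * exp (ρ * τ)) := by
      rw [hTI' t τ, hE, eq_div_iff (mul_ne_zero hρ hEne)]
      field_simp
      ring
    refine hdiv.congr_deriv ?_
    rw [hη' t τ, hTUeq, hTIeq, hV' t τ, hδ' τ]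
    generalize hDd : V t * (T_I t * δ + T_U t * ρ) * exp (ρ * τ) - V t * T_I t * δ = D at hD ⊢
    generalize hFd : (ρ - δ) * exp (ρ * τ) + δ = F at h1 ⊢
    field_simp
    subst hDd hFd
    ring
  · intro t hV hTU
    rw [hη' t 0]
    rw [mul_zero, exp_zero]
    rw [div_eq_iff (by
      have : V t * (T_I t * δ + T_U t * ρ) * 1 - V t * T_I t * δ = V t * T_U t * ρ := by ring
      rw [this]
      exact mul_ne_zero (mul_ne_zero hV hTU) hρ)]
    ring
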